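/- If σ_j is a negative simplex with persistence pair (i, j), then the class of the cycle given by column R_j of the reduced boundary matrix generates the kernel of the map H_*(K_{j-1}) → H_*(K_j) induced by inclusion, and this kernel is one-dimensional. -/

import Mathlib

noncomputable def bnd (V : Type) [DecidableEq V] :
    (Finset V →₀ ZMod 2) →ₗ[ZMod 2] (Finset V →₀ ZMod 2) :=
  Finsupp.lsum ℕ fun s =>
    (LinearMap.id : ZMod 2 →ₗ[ZMod 2] ZMod 2).smulRight
      (∑ v ∈ s, Finsupp.single (s.erase v) (1 : ZMod 2))

/-- Chains supported on a given set of simplices. -/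
noncomputable def chainsOn {V : Type} [DecidableEq V] (S : Set (Finset V)) :
    Submodule (ZMod 2) (Finset V →₀ ZMod 2) :=
  Finsupp.supported (ZMod 2) (ZMod 2) S

/-- Cycles supported on a given set of simplices. -/
noncomputable def cyclesOn {V : Type} [DecidableEq V] (S : Set (Finset V)) :
    Submodule (ZMod 2) (Finset V →₀ ZMod 2) :=
  chainsOn S ⊓ LinearMap.ker (bnd V)

/-- Boundaries of chains supported on a given set of simplices. -/
noncomputable def boundariesOn {V : Type} [DecidableEq V] (S : Set (Finset V)) :
    Submodule (ZMod 2) (Finset V →₀ ZMod 2) :=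
  Submodule.map (bnd V) (chainsOn S)

/-- Left-to-right column addition over ℤ/2: add column `i` to column `j`. -/
def colAdd {n : ℕ} (M : Matrix (Fin n) (Fin n) (ZMod 2)) (i j : Fin n) :
    Matrix (Fin n) (Fin n) (ZMod 2) :=
  fun r c => if c = j then M r j + M r i else M r c

/-- One step of left-to-right column reduction: add some column `i` to a
later column `j`. -/
def Step {n : ℕ} (M N : Matrix (Fin n) (Fin n) (ZMod 2)) : Prop :=
  ∃ i j : Fin n, i < j ∧ N = colAdd M i j

/-- `R` is obtained from `M` by a finite sequence of left-to-right column
additions. -/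
def Reduces {n : ℕ} (M R : Matrix (Fin n) (Fin n) (ZMod 2)) : Prop :=
  Relation.ReflTransGen Step M R

/-- `i` is the lowest one (largest row index of a nonzero entry) of
column `j` of `R`. -/
def IsLow {n : ℕ} (R : Matrix (Fin n) (Fin n) (ZMod 2)) (i j : Fin n) : Prop :=
  R i j ≠ 0 ∧ ∀ r, R r j ≠ 0 → r ≤ i

/-- A matrix is reduced if distinct nonzero columns have distinct lowest ones. -/
def Reduced {n : ℕ} (R : Matrix (Fin n) (Fin n) (ZMod 2)) : Prop :=
  ∀ i j j', IsLow R i j → IsLow R i j' → j = j'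

/-- The ℤ/2 boundary matrix of a sequence of simplices `σ`:
entry (i,j) is 1 iff `σ i` is a codimension-1 face of `σ j`. -/
def bmat {V : Type} [DecidableEq V] {n : ℕ} (σ : Fin n → Finset V) :
    Matrix (Fin n) (Fin n) (ZMod 2) :=
  fun i j => if σ i ⊆ σ j ∧ (σ i).card + 1 = (σ j).card then 1 else 0

/-- The chain represented by column `j` of the matrix `R`: the sum of the
simplices whose row indices carry nonzero entries. -/
noncomputable def chainOf {V : Type} [DecidableEq V] {n : ℕ} (σ : Fin n → Finset V)
    (R : Matrix (Fin n) (Fin n) (ZMod 2)) (j : Fin n) : Finset V →₀ ZMod 2 :=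
  ∑ i : Fin n, Finsupp.single (σ i) (R i j)

section Aux
variable {V : Type} [DecidableEq V] {n : ℕ}

lemma bnd_single (s : Finset V) (a : ZMod 2) :
    bnd V (Finsupp.single s a) = a • ∑ v ∈ s, Finsupp.single (s.erase v) (1 : ZMod 2) := by
  simp [bnd, Finsupp.lsum_single]

lemma two_smul_zero (x : Finset V →₀ ZMod 2) : x + x = 0 := by
  have h : ((1 : ZMod 2) + 1) = 0 := by decide
  calc x + x = (1 : ZMod 2) • x + (1 : ZMod 2) • x := by rw [one_smul]
    _ = ((1 : ZMod 2) + 1) • x := by rw [add_smul]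
    _ = 0 := by rw [h, zero_smul]

lemma bnd_bnd (x : Finset V →₀ ZMod 2) : bnd V (bnd V x) = 0 := by
  induction x using Finsupp.induction_linear with
  | zero => simp
  | add f g hf hg => rw [map_add, map_add, hf, hg, add_zero]
  | single s a =>
    rw [bnd_single, map_smul, map_sum]
    have h1 : ∀ v ∈ s, bnd V (Finsupp.single (s.erase v) (1:ZMod 2)) =
        ∑ w ∈ s.erase v, Finsupp.single ((s.erase v).erase w) (1:ZMod 2) := by
      intro v _; rw [bnd_single, one_smul]
    rw [Finset.sum_congr rfl h1, Finset.sum_sigma']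
    rw [Finset.sum_involution (g := fun p _ => (⟨p.2, p.1⟩ : (_ : V) × V))
      (fun p hp => ?_) (fun p hp _ => ?_) (fun p hp => ?_) (fun p hp => ?_), smul_zero]
    · have : p.2 ∈ s.erase p.1 := (Finset.mem_sigma.mp hp).2
      rw [Finset.erase_right_comm]
      exact two_smul_zero _
    · have h2 : p.2 ∈ s.erase p.1 := (Finset.mem_sigma.mp hp).2
      intro he
      have : p.2 = p.1 := congrArg Sigma.fst he
      exact (Finset.mem_erase.mp h2).1 this
    · have h2 := Finset.mem_sigma.mp hp
      have h3 := Finset.mem_erase.mp h2.2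
      exact Finset.mem_sigma.mpr ⟨h3.2, Finset.mem_erase.mpr ⟨fun he => h3.1 he.symm, h2.1⟩⟩
    · rfl

lemma bnd_empty (a : ZMod 2) : bnd V (Finsupp.single (∅ : Finset V) a) = 0 := by
  rw [bnd_single]; simp

end Aux
section Aux2
set_option linter.unusedSectionVars false
variable {V : Type} [DecidableEq V] {n : ℕ} {σ : Fin n → Finset V}

lemma zmod2_ne_zero {a : ZMod 2} (h : a ≠ 0) : a = 1 := by revert h; revert a; decide

lemma bmat_lt (hinj : Function.Injective σ) (hne : ∀ i, (σ i).Nonempty)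
    (hfilt : ∀ j : Fin n, ∀ t ⊆ σ j, t.Nonempty → ∃ i ≤ j, σ i = t)
    {r k : Fin n} (h : bmat σ r k ≠ 0) : r < k := by
  unfold bmat at h
  by_cases hc : σ r ⊆ σ k ∧ (σ r).card + 1 = (σ k).card
  · obtain ⟨i', hi', he⟩ := hfilt k (σ r) hc.1 (hne r)
    have : r = i' := hinj he.symm
    subst this
    refine lt_of_le_of_ne hi' fun hrk => ?_
    subst hrk
    omega
  · rw [if_neg hc] at h; exact absurd rfl h

lemma colB_eq (hinj : Function.Injective σ) (hne : ∀ i, (σ i).Nonempty)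
    (hfilt : ∀ j : Fin n, ∀ t ⊆ σ j, t.Nonempty → ∃ i ≤ j, σ i = t) (k : Fin n) :
    (∑ r : Fin n, Finsupp.single (σ r) (bmat σ r k)) =
      bnd V (Finsupp.single (σ k) 1) +
        (if (σ k).card = 1 then Finsupp.single (∅ : Finset V) (1 : ZMod 2) else 0) := by
  rw [bnd_single, one_smul]
  by_cases h1 : (σ k).card = 1
  · obtain ⟨v, hv⟩ := Finset.card_eq_one.mp h1
    rw [if_pos h1, hv, Finset.sum_singleton, Finset.erase_singleton]
    have hz : ∀ r ∈ Finset.univ, Finsupp.single (σ r) (bmat σ r k) = (0 : Finset V →₀ ZMod 2) := by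
      intro r _
      have : bmat σ r k = 0 := by
        unfold bmat; rw [if_neg]; rintro ⟨-, hc⟩
        have := Finset.card_pos.mpr (hne r); omega
      rw [this, Finsupp.single_zero]
    rw [Finset.sum_eq_zero hz]
    exact (two_smul_zero _).symm
  · rw [if_neg h1, add_zero]
    have hsub : (Finset.univ.filter fun r => bmat σ r k ≠ 0) ⊆ Finset.univ := Finset.filter_subset _ _
    rw [← Finset.sum_subset hsub (fun r _ hr => by
      have : bmat σ r k = 0 := by
        by_contra hb; exact hr (Finset.mem_filter.mpr ⟨Finset.mem_univ r, hb⟩)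
      rw [this, Finsupp.single_zero])]
    have hcard2 : 2 ≤ (σ k).card := by
      have := Finset.card_pos.mpr (hne k); omega
    have hfx : ∀ v, v ∈ σ k → ((σ k).erase v).Nonempty := by
      intro v hv
      exact Finset.card_pos.mp (by rw [Finset.card_erase_of_mem hv]; omega)
    obtain ⟨pick, pickspec⟩ : ∃ f : ∀ v ∈ σ k, Fin n,
        ∀ v hv, σ (f v hv) = (σ k).erase v :=
      ⟨fun v hv => (hfilt k ((σ k).erase v) (Finset.erase_subset _ _) (hfx v hv)).choose,
       fun v hv => (hfilt k ((σ k).erase v) (Finset.erase_subset _ _) (hfx v hv)).choose_spec.2⟩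
    have hbm : ∀ v (hv : v ∈ σ k), bmat σ (pick v hv) k = 1 := by
      intro v hv
      unfold bmat; rw [if_pos]
      rw [pickspec v hv]
      exact ⟨Finset.erase_subset _ _, by rw [Finset.card_erase_of_mem hv]; omega⟩
    refine (Finset.sum_bij pick ?_ ?_ ?_ ?_).symm
    · intro v hv
      refine Finset.mem_filter.mpr ⟨Finset.mem_univ _, ?_⟩
      rw [hbm v hv]; decide
    · intro v₁ hv₁ v₂ hv₂ he
      have he2 : (σ k).erase v₁ = (σ k).erase v₂ := by
        rw [← pickspec v₁ hv₁, ← pickspec v₂ hv₂, he]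
      by_contra hne12
      have hm : v₂ ∈ (σ k).erase v₁ := Finset.mem_erase.mpr ⟨fun h => hne12 h.symm, hv₂⟩
      rw [he2] at hm
      exact (Finset.mem_erase.mp hm).1 rfl
    · intro r hr
      have hb : bmat σ r k ≠ 0 := (Finset.mem_filter.mp hr).2
      have hc : σ r ⊆ σ k ∧ (σ r).card + 1 = (σ k).card := by
        by_contra hc; unfold bmat at hb; rw [if_neg hc] at hb; exact hb rfl
      have hlt : (σ r).card < (σ k).card := by omega
      obtain ⟨v, hvk, hvr⟩ : ∃ v ∈ σ k, v ∉ σ r := by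
        by_contra hall
        push_neg at hall
        have := Finset.card_le_card hall
        omega
      have hsub2 : σ r ⊆ (σ k).erase v := fun x hx =>
        Finset.mem_erase.mpr ⟨fun he => hvr (he ▸ hx), hc.1 hx⟩
      have heq : σ r = (σ k).erase v := by
        apply Finset.eq_of_subset_of_card_le hsub2
        rw [Finset.card_erase_of_mem hvk]; omega
      exact ⟨v, hvk, hinj (by rw [pickspec v hvk, heq])⟩
    · intro v hv
      rw [hbm v hv, pickspec v hv]

end Aux2
section Aux3
set_option linter.unusedSectionVars false
variable {n : ℕ}

def UniUp (U : Matrix (Fin n) (Fin n) (ZMod 2)) : Prop :=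
  (∀ k, U k k = 1) ∧ ∀ ⦃k l : Fin n⦄, l < k → U k l = 0

lemma UniUp.one : UniUp (1 : Matrix (Fin n) (Fin n) (ZMod 2)) :=
  ⟨fun k => Matrix.one_apply_eq k, fun k l h => Matrix.one_apply_ne h.ne'⟩

lemma UniUp.mul {U T : Matrix (Fin n) (Fin n) (ZMod 2)} (hU : UniUp U) (hT : UniUp T) :
    UniUp (U * T) := by
  constructor
  · intro k
    rw [Matrix.mul_apply, Finset.sum_eq_single k]
    · rw [hU.1, hT.1, one_mul]
    · intro l _ hl
      rcases lt_or_gt_of_ne hl with h | h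
      · rw [hU.2 h, zero_mul]
      · rw [hT.2 h, mul_zero]
    · intro h; exact absurd (Finset.mem_univ k) h
  · intro k l hlk
    rw [Matrix.mul_apply]
    apply Finset.sum_eq_zero
    intro m _
    rcases lt_or_ge m k with h | h
    · rw [hU.2 h, zero_mul]
    · rw [hT.2 (lt_of_lt_of_le hlk h), mul_zero]

lemma colAdd_eq (X : Matrix (Fin n) (Fin n) (ZMod 2)) {p q : Fin n} (hpq : p ≠ q) :
    colAdd X p q = X * (1 + Matrix.single p q 1) := by
  ext r c
  rw [Matrix.mul_add, Matrix.mul_one, Matrix.add_apply]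
  unfold colAdd
  by_cases hc : c = q
  · subst hc
    rw [if_pos rfl, Matrix.mul_single_apply_same, mul_one]
  · rw [if_neg hc, Matrix.mul_single_apply_of_ne 1 p q r c hc X, add_zero]

lemma uniUp_transvection {p q : Fin n} (h : p < q) :
    UniUp (1 + Matrix.single p q (1 : ZMod 2)) := by
  constructor
  · intro k
    rw [Matrix.add_apply, Matrix.one_apply_eq,
      Matrix.single_apply_of_ne (h := by rintro ⟨rfl, rfl⟩; exact absurd h (lt_irrefl _)),
      add_zero]
  · intro k l hlk
    rw [Matrix.add_apply, Matrix.one_apply_ne hlk.ne',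
      Matrix.single_apply_of_ne
        (h := by rintro ⟨rfl, rfl⟩; exact absurd (h.trans hlk) (lt_irrefl _)),
      add_zero]

lemma transvection_sq {p q : Fin n} (hpq : p ≠ q) :
    (1 + Matrix.single p q 1) * (1 + Matrix.single p q (1 : ZMod 2)) = 1 := by
  have hEE : Matrix.single p q (1 : ZMod 2) * Matrix.single p q 1 = 0 :=
    Matrix.single_mul_single_of_ne _ _ _ _ (fun h => hpq h.symm) _
  have expand : (1 + Matrix.single p q (1 : ZMod 2)) *
      (1 + Matrix.single p q (1 : ZMod 2)) =
      1 + (Matrix.single p q (1 : ZMod 2) + Matrix.single p q (1 : ZMod 2)) +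
        Matrix.single p q (1 : ZMod 2) * Matrix.single p q (1 : ZMod 2) := by
    noncomm_ring
  rw [expand, hEE, add_zero]
  have hE2 : Matrix.single p q (1 : ZMod 2) + Matrix.single p q 1 = 0 := by
    ext r c
    rw [Matrix.add_apply, Matrix.zero_apply]
    have : ∀ a : ZMod 2, a + a = 0 := by decide
    exact this _
  rw [hE2, add_zero]

lemma exists_U {M R : Matrix (Fin n) (Fin n) (ZMod 2)} (h : Reduces M R) :
    ∃ U W : Matrix (Fin n) (Fin n) (ZMod 2), R = M * U ∧ U * W = 1 ∧ UniUp U ∧ UniUp W := by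
  induction h with
  | refl => exact ⟨1, 1, (Matrix.mul_one M).symm, Matrix.one_mul 1, UniUp.one, UniUp.one⟩
  | tail _ hstep ih =>
    obtain ⟨U, W, hMU, hUW, hU, hW⟩ := ih
    obtain ⟨p, q, hpq, rfl⟩ := hstep
    refine ⟨U * (1 + Matrix.single p q 1), (1 + Matrix.single p q 1) * W, ?_, ?_,
      hU.mul (uniUp_transvection hpq), (uniUp_transvection hpq).mul hW⟩
    · rw [colAdd_eq _ hpq.ne, hMU, Matrix.mul_assoc]
    · calc U * (1 + Matrix.single p q 1) * ((1 + Matrix.single p q 1) * W)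
          = U * ((1 + Matrix.single p q 1) * (1 + Matrix.single p q 1)) * W := by
            rw [Matrix.mul_assoc U, Matrix.mul_assoc, Matrix.mul_assoc]
        _ = 1 := by rw [transvection_sq hpq.ne, Matrix.mul_one, hUW]

end Aux3
section Aux4
set_option linter.unusedSectionVars false
variable {V : Type} [DecidableEq V] {n : ℕ} {σ : Fin n → Finset V}

lemma boundariesOn_image (A : Set (Fin n)) :
    boundariesOn (σ '' A) = Submodule.span (ZMod 2)
      (Set.range fun k : A => bnd V (Finsupp.single (σ (k : Fin n)) (1 : ZMod 2))) := by
  unfold boundariesOn chainsOn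
  rw [Finsupp.supported_eq_span_single, Submodule.map_span]
  congr 1
  rw [Set.image_image, Set.image_image, Set.image_eq_range]

lemma boundariesOn_image' (p : Fin n → Prop) [DecidablePred p] :
    boundariesOn (σ '' {k | p k}) = Submodule.span (ZMod 2)
      (Set.range fun k : Fin n =>
        if p k then bnd V (Finsupp.single (σ k) (1 : ZMod 2)) else 0) := by
  rw [boundariesOn_image]
  apply le_antisymm
  · rw [Submodule.span_le]
    rintro x ⟨k, rfl⟩
    apply Submodule.subset_span
    refine ⟨↑k, ?_⟩
    have hk : p ↑k := k.2
    simp only [if_pos hk]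
  · rw [Submodule.span_le]
    rintro x ⟨k, rfl⟩
    by_cases h : p k
    · simp only [if_pos h]
      exact Submodule.subset_span ⟨⟨k, h⟩, rfl⟩
    · simp only [if_neg h]
      exact Submodule.zero_mem _

lemma mem_boundariesOn_iff (p : Fin n → Prop) [DecidablePred p] (x : Finset V →₀ ZMod 2) :
    x ∈ boundariesOn (σ '' {k | p k}) ↔
      ∃ d : Fin n → ZMod 2, (∀ k, ¬ p k → d k = 0) ∧
        ∑ k : Fin n, d k • bnd V (Finsupp.single (σ k) 1) = x := by
  rw [boundariesOn_image', Submodule.mem_span_range_iff_exists_fun]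
  constructor
  · rintro ⟨c, hc⟩
    refine ⟨fun k => if p k then c k else 0, fun k hk => if_neg hk, ?_⟩
    rw [← hc]
    refine Finset.sum_congr rfl fun k _ => ?_
    by_cases h : p k
    · simp only [if_pos h]
    · simp only [if_neg h, smul_zero, zero_smul]
  · rintro ⟨d, hd, hsum⟩
    refine ⟨d, ?_⟩
    rw [← hsum]
    refine Finset.sum_congr rfl fun k _ => ?_
    by_cases h : p k
    · simp only [if_pos h]
    · simp only [if_neg h, hd k h, zero_smul, smul_zero]

lemma master (hinj : Function.Injective σ) (hne : ∀ i, (σ i).Nonempty)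
    (hfilt : ∀ j : Fin n, ∀ t ⊆ σ j, t.Nonempty → ∃ i ≤ j, σ i = t)
    (U : Matrix (Fin n) (Fin n) (ZMod 2)) (j : Fin n) :
    ∃ c₀ : ZMod 2, chainOf σ (bmat σ * U) j =
      (∑ k : Fin n, U k j • bnd V (Finsupp.single (σ k) 1)) +
        c₀ • Finsupp.single (∅ : Finset V) (1 : ZMod 2) := by
  refine ⟨∑ k : Fin n, if (σ k).card = 1 then U k j else 0, ?_⟩
  unfold chainOf
  calc ∑ r : Fin n, Finsupp.single (σ r) ((bmat σ * U) r j)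
      = ∑ r : Fin n, ∑ k : Fin n, Finsupp.single (σ r) (bmat σ r k * U k j) := by
        refine Finset.sum_congr rfl fun r _ => ?_
        rw [Matrix.mul_apply, Finsupp.single_finset_sum]
    _ = ∑ k : Fin n, ∑ r : Fin n, Finsupp.single (σ r) (U k j * bmat σ r k) := by
        rw [Finset.sum_comm]
        exact Finset.sum_congr rfl fun k _ => Finset.sum_congr rfl fun r _ => by rw [mul_comm]
    _ = ∑ k : Fin n, U k j • ∑ r : Fin n, Finsupp.single (σ r) (bmat σ r k) := by
        refine Finset.sum_congr rfl fun k _ => ?_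
        rw [Finset.smul_sum]
        exact Finset.sum_congr rfl fun r _ => by
          rw [Finsupp.smul_single, smul_eq_mul]
    _ = ∑ k : Fin n, U k j • (bnd V (Finsupp.single (σ k) 1) +
          (if (σ k).card = 1 then Finsupp.single (∅ : Finset V) (1 : ZMod 2) else 0)) := by
        exact Finset.sum_congr rfl fun k _ => by rw [colB_eq hinj hne hfilt k]
    _ = (∑ k : Fin n, U k j • bnd V (Finsupp.single (σ k) 1)) +
          ∑ k : Fin n, U k j •
            (if (σ k).card = 1 then Finsupp.single (∅ : Finset V) (1 : ZMod 2) else 0) := by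
        rw [← Finset.sum_add_distrib]
        exact Finset.sum_congr rfl fun k _ => smul_add _ _ _
    _ = (∑ k : Fin n, U k j • bnd V (Finsupp.single (σ k) 1)) +
          (∑ k : Fin n, if (σ k).card = 1 then U k j else 0) •
            Finsupp.single (∅ : Finset V) (1 : ZMod 2) := by
        congr 1
        rw [Finset.sum_smul]
        refine Finset.sum_congr rfl fun k _ => ?_
        by_cases h : (σ k).card = 1
        · rw [if_pos h, if_pos h]
        · rw [if_neg h, if_neg h, smul_zero, zero_smul]

lemma single_apply_sum (hinj : Function.Injective σ) (r : Fin n) (t : Fin n → ZMod 2) :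
    (∑ k : Fin n, Finsupp.single (σ k) (t k)) (σ r) = t r := by
  rw [Finsupp.finset_sum_apply]
  rw [Finset.sum_eq_single r]
  · rw [Finsupp.single_apply, if_pos rfl]
  · intro k _ hk
    rw [Finsupp.single_apply, if_neg (fun h => hk (hinj h))]
  · exact fun h => absurd (Finset.mem_univ r) h

lemma e_apply (hinj : Function.Injective σ) (hne : ∀ i, (σ i).Nonempty)
    (hfilt : ∀ j : Fin n, ∀ t ⊆ σ j, t.Nonempty → ∃ i ≤ j, σ i = t) (k r : Fin n) :
    bnd V (Finsupp.single (σ k) (1 : ZMod 2)) (σ r) = bmat σ r k := by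
  have h2 := congrArg (fun f : Finset V →₀ ZMod 2 => f (σ r)) (colB_eq hinj hne hfilt k)
  rw [single_apply_sum hinj, Finsupp.add_apply] at h2
  have h3 : (if (σ k).card = 1 then Finsupp.single (∅ : Finset V) (1 : ZMod 2) else 0) (σ r)
      = 0 := by
    by_cases hc : (σ k).card = 1
    · rw [if_pos hc, Finsupp.single_apply, if_neg (fun h => (hne r).ne_empty h.symm)]
    · rw [if_neg hc, Finsupp.zero_apply]
  rw [h3, add_zero] at h2
  exact h2.symm

lemma no_rel {R : Matrix (Fin n) (Fin n) (ZMod 2)} (hRed : Reduced R) {i j : Fin n}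
    (hlow : IsLow R i j) (v : Fin n → ZMod 2) (hvj : v j ≠ 0)
    (hrel : ∀ r, ∑ k : Fin n, R r k * v k = 0) : False := by
  classical
  set T : Finset (Fin n) := Finset.univ.filter (fun k => v k ≠ 0 ∧ ∃ r, R r k ≠ 0) with hT
  have hjT : j ∈ T := Finset.mem_filter.mpr ⟨Finset.mem_univ _, hvj, ⟨i, hlow.1⟩⟩
  obtain ⟨f, hfl⟩ : ∃ f : Fin n → Fin n, ∀ k ∈ T, IsLow R (f k) k := by
    refine ⟨fun k =>
      if h : (Finset.univ.filter fun r => R r k ≠ 0).Nonempty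
      then (Finset.univ.filter fun r => R r k ≠ 0).max' h else j, ?_⟩
    intro k hk
    obtain ⟨-, -, r₀, hr₀⟩ := Finset.mem_filter.mp hk
    beta_reduce
    have hne' : (Finset.univ.filter fun r => R r k ≠ 0).Nonempty :=
      ⟨r₀, Finset.mem_filter.mpr ⟨Finset.mem_univ _, hr₀⟩⟩
    rw [dif_pos hne']
    constructor
    · have := Finset.max'_mem _ hne'
      rw [Finset.mem_filter] at this
      exact this.2
    · intro r hr
      exact Finset.le_max' _ r (Finset.mem_filter.mpr ⟨Finset.mem_univ _, hr⟩)
  obtain ⟨k0, hk0, hmax⟩ := Finset.exists_max_image T f ⟨j, hjT⟩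
  have h0 := hrel (f k0)
  rw [Finset.sum_eq_single k0] at h0
  · exact mul_ne_zero (hfl k0 hk0).1 (Finset.mem_filter.mp hk0).2.1 h0
  · intro b _ hb
    by_cases hvb : v b = 0
    · rw [hvb, mul_zero]
    · by_cases hcol : ∃ r, R r b ≠ 0
      · have hbT : b ∈ T := Finset.mem_filter.mpr ⟨Finset.mem_univ _, hvb, hcol⟩
        have hflb := hfl b hbT
        have hne2 : f b ≠ f k0 := by
          intro he
          exact hb (hRed (f b) b k0 hflb (by rw [he]; exact hfl k0 hk0))
        have hlt : f b < f k0 := lt_of_le_of_ne (hmax b hbT) hne2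
        have hz : R (f k0) b = 0 := by
          by_contra h
          exact absurd (hflb.2 _ h) (not_le.mpr hlt)
        rw [hz, zero_mul]
      · push_neg at hcol
        rw [hcol (f k0), zero_mul]
  · exact fun h => absurd (Finset.mem_univ k0) h

end Aux4

/-- if σ_j is a negative simplex with persistence pair (i, j),
then the class of the cycle given by column `R_j` generates the kernel of the
map H_*(K_{j-1}) → H_*(K_j) induced by inclusion, and this kernel is
one-dimensional.  Concretely (identifying the kernel with
(Z(K_{j-1}) ∩ B(K_j)) / B(K_{j-1})): the chain `z` of column `R_j` is a cycle
of `K_{j-1}` which is a boundary in `K_j` but not in `K_{j-1}` (so its class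
spans a nonzero subspace of the kernel), and every cycle of `K_{j-1}` that
becomes a boundary in `K_j` is homologous in `K_{j-1}` to `0` or to `z` (so
the kernel is exactly the one-dimensional span of the class of `z`). -/
theorem negative_simplex_kernel_one_dimensional
    {V : Type} [DecidableEq V] {n : ℕ} (σ : Fin n → Finset V)
    (hinj : Function.Injective σ)
    (hne : ∀ i, (σ i).Nonempty)
    (hfilt : ∀ j : Fin n, ∀ t ⊆ σ j, t.Nonempty → ∃ i ≤ j, σ i = t)
    (R : Matrix (Fin n) (Fin n) (ZMod 2))
    (hred : Reduces (bmat σ) R) (hR : Reduced R)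
    (i j : Fin n) (hlow : IsLow R i j) :
    chainOf σ R j ∈ cyclesOn {s | ∃ i' : Fin n, i' < j ∧ σ i' = s} ∧
    chainOf σ R j ∉ boundariesOn {s | ∃ i' : Fin n, i' < j ∧ σ i' = s} ∧
    chainOf σ R j ∈ boundariesOn {s | ∃ i' : Fin n, i' ≤ j ∧ σ i' = s} ∧
    ∀ c ∈ cyclesOn {s | ∃ i' : Fin n, i' < j ∧ σ i' = s},
      c ∈ boundariesOn {s | ∃ i' : Fin n, i' ≤ j ∧ σ i' = s} →
        c ∈ boundariesOn {s | ∃ i' : Fin n, i' < j ∧ σ i' = s} ∨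
        c + chainOf σ R j ∈ boundariesOn {s | ∃ i' : Fin n, i' < j ∧ σ i' = s} := by
  classical
  obtain ⟨U, W, hRU, hUW, hU, hW⟩ := exists_U hred
  obtain ⟨c₀, hz⟩ := master hinj hne hfilt U j
  rw [← hRU] at hz
  have htwo : ∀ a : ZMod 2, a + a = 0 := by decide
  have hset1 : {s : Finset V | ∃ i' : Fin n, i' < j ∧ σ i' = s} = σ '' {k | k < j} := rfl
  have hset2 : {s : Finset V | ∃ i' : Fin n, i' ≤ j ∧ σ i' = s} = σ '' {k | k ≤ j} := rfl
  -- R is strictly upper triangular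
  have hRtri : ∀ r k : Fin n, ¬ r < k → R r k = 0 := by
    intro r k hrk
    rw [hRU, Matrix.mul_apply]
    apply Finset.sum_eq_zero
    intro m _
    by_cases hm : bmat σ r m = 0
    · rw [hm, zero_mul]
    · have h1 : r < m := bmat_lt hinj hne hfilt hm
      rw [hU.2 (lt_of_le_of_lt (not_lt.mp hrk) h1), mul_zero]
  -- evaluation of coefficient sums at simplices
  have heval : ∀ (a : Fin n → ZMod 2) (r : Fin n),
      (∑ k : Fin n, a k • bnd V (Finsupp.single (σ k) (1 : ZMod 2))) (σ r)
        = ∑ k : Fin n, bmat σ r k * a k := by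
    intro a r
    rw [Finsupp.finset_sum_apply]
    refine Finset.sum_congr rfl fun k _ => ?_
    rw [Finsupp.smul_apply, e_apply hinj hne hfilt k r, smul_eq_mul, mul_comm]
  have hempty : ∀ (c : ZMod 2) (r : Fin n),
      (c • Finsupp.single (∅ : Finset V) (1 : ZMod 2)) (σ r) = 0 := by
    intro c r
    rw [Finsupp.smul_apply, Finsupp.single_apply,
      if_neg (fun h => (hne r).ne_empty h.symm), smul_zero]
  have haddsmul : ∀ x y : Fin n → ZMod 2,
      ∑ k : Fin n, (x k + y k) • bnd V (Finsupp.single (σ k) (1 : ZMod 2))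
        = (∑ k : Fin n, x k • bnd V (Finsupp.single (σ k) (1 : ZMod 2)))
          + ∑ k : Fin n, y k • bnd V (Finsupp.single (σ k) (1 : ZMod 2)) := by
    intro x y
    rw [← Finset.sum_add_distrib]
    exact Finset.sum_congr rfl fun k _ => add_smul _ _ _
  -- the W-transport sum identity
  have hRWsum : ∀ (a : Fin n → ZMod 2) (r : Fin n),
      ∑ k : Fin n, R r k * (∑ l : Fin n, W k l * a l)
        = ∑ l : Fin n, bmat σ r l * a l := by
    intro a r
    have hRW : R * W = bmat σ := by rw [hRU, Matrix.mul_assoc, hUW, Matrix.mul_one]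
    calc ∑ k : Fin n, R r k * (∑ l : Fin n, W k l * a l)
        = ∑ k : Fin n, ∑ l : Fin n, R r k * (W k l * a l) := by
          exact Finset.sum_congr rfl fun k _ => by rw [Finset.mul_sum]
      _ = ∑ l : Fin n, (∑ k : Fin n, R r k * W k l) * a l := by
          rw [Finset.sum_comm]
          refine Finset.sum_congr rfl fun l _ => ?_
          rw [Finset.sum_mul]
          exact Finset.sum_congr rfl fun k _ => (mul_assoc _ _ _).symm
      _ = ∑ l : Fin n, bmat σ r l * a l := by
          refine Finset.sum_congr rfl fun l _ => ?_
          rw [← Matrix.mul_apply, hRW]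
  -- the key contradiction: no coefficient vector with a j = 1 and vanishing
  -- beyond j can have boundary-matrix image zero
  have key : ∀ a : Fin n → ZMod 2, a j = 1 → (∀ k, j < k → a k = 0) →
      (∀ r, ∑ k : Fin n, bmat σ r k * a k = 0) → False := by
    intro a haj hagt hBa
    refine no_rel hR hlow (fun k => ∑ l : Fin n, W k l * a l) ?_ ?_
    · show (∑ l : Fin n, W j l * a l) ≠ 0
      have hvj : ∑ l : Fin n, W j l * a l = 1 := by
        rw [Finset.sum_eq_single j]
        · rw [hW.1 j, one_mul, haj]
        · intro l _ hl
          rcases lt_or_gt_of_ne hl with h | h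
          · rw [hW.2 h, zero_mul]
          · rw [hagt l h, mul_zero]
        · exact fun h => absurd (Finset.mem_univ j) h
      rw [hvj]
      exact one_ne_zero
    · intro r
      rw [hRWsum a r]
      exact hBa r
  -- σ j is not a vertex
  have hvert : (σ j).card ≠ 1 := by
    intro h1
    have hBj : ∀ r, bmat σ r j = 0 := by
      intro r; unfold bmat; rw [if_neg]
      rintro ⟨-, hc⟩
      have := Finset.card_pos.mpr (hne r); omega
    have hBa : ∀ r, ∑ k : Fin n, bmat σ r k * (if k = j then 0 else U k j) = R r j := by
      intro r
      have h2 : ∑ k : Fin n, bmat σ r k * (if k = j then 0 else U k j)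
          = ∑ k : Fin n, bmat σ r k * U k j := by
        refine Finset.sum_congr rfl fun k _ => ?_
        by_cases hk : k = j
        · rw [hk, hBj r, zero_mul, zero_mul]
        · rw [if_neg hk]
      rw [h2, ← Matrix.mul_apply, ← hRU]
    refine no_rel hR hlow
      (fun k => (∑ l : Fin n, W k l * (if l = j then 0 else U l j))
        + (if k = j then 1 else 0)) ?_ ?_
    · show (∑ l : Fin n, W j l * (if l = j then 0 else U l j)) + (if j = j then 1 else 0) ≠ 0
      have hvj : ∑ l : Fin n, W j l * (if l = j then 0 else U l j) = 0 := by
        apply Finset.sum_eq_zero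
        intro l _
        by_cases hl : l = j
        · rw [if_pos hl, mul_zero]
        · rcases lt_or_gt_of_ne hl with h | h
          · rw [hW.2 h, zero_mul]
          · rw [if_neg hl, hU.2 h, mul_zero]
      rw [hvj, zero_add, if_pos rfl]
      exact one_ne_zero
    · intro r
      have hsplit : ∑ k : Fin n, R r k *
          ((∑ l : Fin n, W k l * (if l = j then 0 else U l j)) + (if k = j then 1 else 0))
          = (∑ k : Fin n, R r k * (∑ l : Fin n, W k l * (if l = j then 0 else U l j)))
            + ∑ k : Fin n, R r k * (if k = j then 1 else 0) := by
        rw [← Finset.sum_add_distrib]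
        exact Finset.sum_congr rfl fun k _ => mul_add _ _ _
      rw [hsplit, hRWsum, hBa r, Finset.sum_eq_single j]
      · rw [if_pos rfl, mul_one, htwo]
      · intro b _ hb; rw [if_neg hb, mul_zero]
      · exact fun h => absurd (Finset.mem_univ j) h
  -- a vertex of σ j occurring strictly before j
  obtain ⟨m, hmlt, hem⟩ : ∃ m : Fin n, m < j ∧
      bnd V (Finsupp.single (σ m) (1 : ZMod 2)) = Finsupp.single (∅ : Finset V) 1 := by
    obtain ⟨v0, hv0⟩ := hne j
    obtain ⟨m, hmj, hm⟩ := hfilt j {v0} (Finset.singleton_subset_iff.mpr hv0)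
      (Finset.singleton_nonempty _)
    have hcard : (σ m).card = 1 := by rw [hm]; exact Finset.card_singleton _
    have hmlt : m < j := lt_of_le_of_ne hmj (fun h => hvert (h ▸ hcard))
    have hBm : ∀ r, bmat σ r m = 0 := by
      intro r; unfold bmat; rw [if_neg]
      rintro ⟨-, hc⟩
      have := Finset.card_pos.mpr (hne r); omega
    have h := colB_eq hinj hne hfilt m
    rw [if_pos hcard, Finset.sum_eq_zero (fun r _ => by
      rw [hBm r, Finsupp.single_zero])] at h
    refine ⟨m, hmlt, ?_⟩
    calc bnd V (Finsupp.single (σ m) (1 : ZMod 2))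
        = bnd V (Finsupp.single (σ m) (1 : ZMod 2)) +
            (Finsupp.single (∅ : Finset V) (1 : ZMod 2) + Finsupp.single ∅ 1) := by
          rw [two_smul_zero, add_zero]
      _ = (bnd V (Finsupp.single (σ m) (1 : ZMod 2)) + Finsupp.single ∅ 1) +
            Finsupp.single ∅ 1 := by rw [add_assoc]
      _ = Finsupp.single ∅ 1 := by rw [← h, zero_add]
  have hitesum : ∑ k : Fin n, (if k = m then c₀ else 0) •
      bnd V (Finsupp.single (σ k) (1 : ZMod 2))
      = c₀ • Finsupp.single (∅ : Finset V) (1 : ZMod 2) := by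
    rw [Finset.sum_eq_single m]
    · rw [if_pos rfl, hem]
    · intro b _ hb; rw [if_neg hb, zero_smul]
    · exact fun h => absurd (Finset.mem_univ m) h
  -- claim 1
  have hzc : chainOf σ R j ∈ cyclesOn {s | ∃ i' : Fin n, i' < j ∧ σ i' = s} := by
    refine Submodule.mem_inf.mpr ⟨?_, ?_⟩
    · show chainOf σ R j ∈ Finsupp.supported (ZMod 2) (ZMod 2) _
      rw [Finsupp.mem_supported]
      intro t ht
      unfold chainOf at ht
      obtain ⟨r, -, hr⟩ := Finset.mem_biUnion.mp (Finsupp.support_finset_sum ht)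
      have ht2 : t = σ r := Finset.mem_singleton.mp (Finsupp.support_single_subset hr)
      have hR0 : R r j ≠ 0 := by
        intro h0
        rw [h0, Finsupp.single_zero, Finsupp.support_zero] at hr
        exact absurd hr (Finset.notMem_empty t)
      have hrj : r < j := by
        by_contra hcon
        exact hR0 (hRtri r j hcon)
      exact ⟨r, hrj, ht2.symm⟩
    · rw [LinearMap.mem_ker, hz, map_add, map_sum, map_smul, bnd_empty, smul_zero, add_zero]
      apply Finset.sum_eq_zero
      intro k _
      rw [map_smul, bnd_bnd, smul_zero]
  -- claim 3
  have hz3 : chainOf σ R j ∈ boundariesOn {s | ∃ i' : Fin n, i' ≤ j ∧ σ i' = s} := by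
    rw [hset2, mem_boundariesOn_iff (fun k => k ≤ j)]
    refine ⟨fun k => U k j + (if k = m then c₀ else 0), ?_, ?_⟩
    · intro k hk
      show U k j + (if k = m then c₀ else 0) = 0
      have h1 : j < k := not_le.mp hk
      have hkm : k ≠ m := by
        intro h; rw [h] at h1; exact absurd h1 (not_lt.mpr hmlt.le)
      rw [hU.2 h1, if_neg hkm, add_zero]
    · rw [haddsmul, hitesum, ← hz]
  -- claim 2
  have hz2 : chainOf σ R j ∉ boundariesOn {s | ∃ i' : Fin n, i' < j ∧ σ i' = s} := by
    rw [hset1, mem_boundariesOn_iff (fun k => k < j)]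
    rintro ⟨d, hd, hsum⟩
    refine key (fun k => U k j + d k) ?_ ?_ ?_
    · show U j j + d j = 1
      rw [hU.1 j, hd j (lt_irrefl j), add_zero]
    · intro k hk
      show U k j + d k = 0
      rw [hU.2 hk, hd k (asymm hk), add_zero]
    · intro r
      have h1 := congrArg (fun x : Finset V →₀ ZMod 2 => x (σ r)) hz
      rw [Finsupp.add_apply, heval, hempty, add_zero] at h1
      have h2 := congrArg (fun x : Finset V →₀ ZMod 2 => x (σ r)) hsum
      rw [heval] at h2
      calc ∑ k : Fin n, bmat σ r k * (U k j + d k)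
          = (∑ k : Fin n, bmat σ r k * U k j) + ∑ k : Fin n, bmat σ r k * d k := by
            rw [← Finset.sum_add_distrib]
            exact Finset.sum_congr rfl fun k _ => mul_add _ _ _
        _ = chainOf σ R j (σ r) + chainOf σ R j (σ r) := by rw [← h1, h2]
        _ = 0 := htwo _
  refine ⟨hzc, hz2, hz3, ?_⟩
  -- claim 4
  intro c hcyc hcb
  rw [hset2, mem_boundariesOn_iff (fun k => k ≤ j)] at hcb
  obtain ⟨d, hd, hsum⟩ := hcb
  by_cases hdj : d j = 0
  · left
    rw [hset1, mem_boundariesOn_iff (fun k => k < j)]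
    refine ⟨d, ?_, hsum⟩
    intro k hk
    rcases lt_or_eq_of_le (not_lt.mp hk) with h | h
    · exact hd k (not_le.mpr h)
    · rw [← h]; exact hdj
  · right
    have hdj1 : d j = 1 := zmod2_ne_zero hdj
    rw [hset1, mem_boundariesOn_iff (fun k => k < j)]
    refine ⟨fun k => (d k + U k j) + (if k = m then c₀ else 0), ?_, ?_⟩
    · intro k hk
      show d k + U k j + (if k = m then c₀ else 0) = 0
      have hjk : j ≤ k := not_lt.mp hk
      have hkm : k ≠ m := fun h => absurd (h ▸ hjk : j ≤ m) (not_le.mpr hmlt)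
      rcases lt_or_eq_of_le hjk with h | h
      · rw [hd k (not_le.mpr h), hU.2 h, add_zero, if_neg hkm, add_zero]
      · rw [← h, hdj1, hU.1 j, if_neg hmlt.ne']
        decide
    · rw [haddsmul, haddsmul, hitesum, hsum, hz, add_assoc]
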